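/- Non-degeneracy via comparison: suppose u solves Δu − ∂ₜu = λ₊ > 0 on {u > 0} in Q_r⁻(t_m,x_m) = (t_m − r², t_m)×B_r(x_m), u(t_m,x_m) > 0, and u is continuous. If sup over Q_r⁻(t_m,x_m) of u is at most (λ₊/(8n))·r², then with v(t,x) := λ₊·((t_m − t)/2 + |x − x_m|²/(8n)), the function u − v is a subsolution of the heat equation on {u > 0} ∩ Q_r⁻(t_m,x_m), u − v ≤ 0 on the parabolic boundary of that set, yet u(t_m,x_m) − v(t_m,x_m) > 0 — a contradiction. Hence sup_{Q_r⁻(t_m,x_m)} u > (λ₊/(8n))·r². -/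

import Mathlib

open Set Filter Topology RealInnerProductSpace

lemma deriv_nonneg_of_left_max {f : ℝ → ℝ} {a d : ℝ} (hd : HasDerivAt f d a)
    (h : ∀ᶠ s in 𝓝[<] a, f s ≤ f a) : 0 ≤ d := by
  have hslope : Tendsto (slope f a) (𝓝[<] a) (𝓝 d) := by
    have := (hd.hasDerivWithinAt (s := Iio a))
    rw [hasDerivWithinAt_iff_tendsto_slope] at this
    simpa [Set.diff_singleton_eq_self (by simp : a ∉ Iio a)] using this
  refine ge_of_tendsto hslope ?_
  filter_upwards [h, self_mem_nhdsWithin] with s hs hs'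
  have hsa : s < a := hs'
  have hkey : slope f a s = (f a - f s) / (a - s) := by
    rw [slope_def_field]
    rw [div_eq_div_iff (by linarith) (by linarith)]
    ring
  rw [hkey]
  exact div_nonneg (by linarith) (by linarith)

lemma second_deriv_nonpos_of_isLocalMax {f : ℝ → ℝ} {a : ℝ}
    (hf : ContDiffAt ℝ 2 f a) (hmax : IsLocalMax f a) : deriv (deriv f) a ≤ 0 := by
  by_contra hK
  push_neg at hK
  obtain ⟨U, hU, hfU⟩ := hf.contDiffOn le_rfl (by simp)
  obtain ⟨V, hVU, hVo, haV⟩ := mem_nhds_iff.1 hU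
  have hfV : ContDiffOn ℝ 2 f V := hfU.mono hVU
  have hdV : ContDiffOn ℝ 1 (deriv f) V := hfV.deriv_of_isOpen hVo (by norm_num)
  have hda : DifferentiableAt ℝ (deriv f) a :=
    ((hdV.differentiableOn (by norm_num)).differentiableAt (hVo.mem_nhds haV))
  have hd0 : deriv f a = 0 := hmax.deriv_eq_zero
  have hder : HasDerivAt (deriv f) (deriv (deriv f) a) a := hda.hasDerivAt
  have hslope : Tendsto (slope (deriv f) a) (𝓝[≠] a) (𝓝 (deriv (deriv f) a)) :=
    hasDerivAt_iff_tendsto_slope.1 hder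
  have hev : ∀ᶠ s in 𝓝[>] a, 0 < slope (deriv f) a s :=
    (hslope.mono_left (nhdsWithin_mono _ (fun x hx => ne_of_gt hx))).eventually
      (eventually_gt_nhds hK)
  have hevpos : ∀ᶠ s in 𝓝[>] a, 0 < deriv f s := by
    filter_upwards [hev, self_mem_nhdsWithin] with s hs hs'
    have h2 : (0:ℝ) < s - a := by simpa [sub_pos] using (hs' : a < s)
    rw [slope_def_field, hd0, sub_zero] at hs
    have := mul_pos hs h2
    rw [div_mul_cancel₀ _ h2.ne'] at this
    linarith
  obtain ⟨b, hb, hIoo⟩ := mem_nhdsGT_iff_exists_Ioo_subset.1 hevpos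
  have hab : a < b := hb
  obtain ⟨ε₁, hε₁, hball⟩ := Metric.mem_nhds_iff.1 (hVo.mem_nhds haV)
  obtain ⟨ε₃, hε₃, hball3⟩ := Metric.mem_nhds_iff.1 hmax
  obtain ⟨m, hm1, hm2, hm3, hmpos⟩ :
      ∃ m : ℝ, m ≤ b - a ∧ m ≤ ε₁ ∧ m ≤ ε₃ ∧ 0 < m :=
    ⟨min (min (b - a) ε₁) ε₃, le_trans (min_le_left _ _) (min_le_left _ _),
      le_trans (min_le_left _ _) (min_le_right _ _), min_le_right _ _,
      lt_min (lt_min (by linarith) hε₁) hε₃⟩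
  have hac : a < a + m / 2 := by linarith
  have hIcc : Icc a (a + m / 2) ⊆ Metric.ball a ε₁ := by
    intro x hx
    obtain ⟨hx1, hx2⟩ := hx
    have : |x - a| < ε₁ := by rw [abs_of_nonneg (by linarith)]; linarith
    simpa [Metric.mem_ball, Real.dist_eq] using this
  have hcont : ContinuousOn f (Icc a (a + m / 2)) :=
    (hfV.continuousOn).mono (fun x hx => hball (hIcc hx))
  have hmono : StrictMonoOn f (Icc a (a + m / 2)) := by
    apply strictMonoOn_of_deriv_pos (convex_Icc _ _) hcont
    intro x hx
    rw [interior_Icc] at hx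
    obtain ⟨hx1, hx2⟩ := hx
    exact hIoo ⟨hx1, by linarith⟩
  have h1 : f a < f (a + m / 2) :=
    hmono (left_mem_Icc.2 hac.le) (right_mem_Icc.2 hac.le) hac
  have h2 : f (a + m / 2) ≤ f a :=
    hball3 (Metric.mem_ball.2 (by rw [Real.dist_eq, abs_of_nonneg (by linarith)]; linarith))
  linarith

lemma iteratedDeriv_two_le_of_quad_max {f : ℝ → ℝ} {b c : ℝ}
    (hf : ContDiffAt ℝ 2 f 0)
    (hmax : IsLocalMax (fun s => f s - (b * s + c * s ^ 2)) 0) :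
    iteratedDeriv 2 f 0 ≤ 2 * c := by
  have hqC : ContDiff ℝ 2 (fun s : ℝ => b * s + c * s ^ 2) := by fun_prop
  set g : ℝ → ℝ := fun s => f s - (b * s + c * s ^ 2) with hg
  have hgC : ContDiffAt ℝ 2 g 0 := hf.sub hqC.contDiffAt
  have hg2 : deriv (deriv g) 0 ≤ 0 := second_deriv_nonpos_of_isLocalMax hgC hmax
  obtain ⟨U, hU, hfU⟩ := hf.contDiffOn le_rfl (by simp)
  obtain ⟨V, hVU, hVo, haV⟩ := mem_nhds_iff.1 hU
  have hfV : ContDiffOn ℝ 2 f V := hfU.mono hVU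
  have hq : ∀ s : ℝ, HasDerivAt (fun s : ℝ => b * s + c * s ^ 2) (b + 2 * c * s) s := by
    intro s
    have h1 : HasDerivAt (fun s : ℝ => b * s) b s := by
      simpa using (hasDerivAt_id s).const_mul b
    have h2 : HasDerivAt (fun s : ℝ => c * s ^ 2) (2 * c * s) s := by
      have := (hasDerivAt_pow 2 s).const_mul c
      simpa [mul_comm, mul_assoc, mul_left_comm] using this
    exact h1.add h2
  have hdiff : ∀ s ∈ V, DifferentiableAt ℝ f s := fun s hs =>
    (hfV.differentiableOn (by norm_num)).differentiableAt (hVo.mem_nhds hs)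
  have hgderiv : ∀ s ∈ V, deriv g s = deriv f s - (b + 2 * c * s) := fun s hs =>
    ((hdiff s hs).hasDerivAt.sub (hq s)).deriv
  have hEq : deriv g =ᶠ[𝓝 0] fun s => deriv f s - (b + 2 * c * s) := by
    filter_upwards [hVo.mem_nhds haV] with s hs using hgderiv s hs
  have hda : DifferentiableAt ℝ (deriv f) 0 := by
    have hdV : ContDiffOn ℝ 1 (deriv f) V := hfV.deriv_of_isOpen hVo (by norm_num)
    exact (hdV.differentiableOn (by norm_num)).differentiableAt (hVo.mem_nhds haV)
  have haff : HasDerivAt (fun s : ℝ => b + 2 * c * s) (2 * c) 0 := by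
    simpa using ((hasDerivAt_id (0:ℝ)).const_mul (2 * c)).const_add b
  have hkey : deriv (deriv g) 0 = deriv (deriv f) 0 - 2 * c := by
    rw [hEq.deriv_eq]
    exact (hda.hasDerivAt.sub haff).deriv
  rw [iteratedDeriv_succ, iteratedDeriv_one]
  linarith [hkey ▸ hg2]

/-- The parabolic operator Δu − ∂ₜu. -/
noncomputable def heatOp (n : ℕ) (u : ℝ × EuclideanSpace ℝ (Fin n) → ℝ)
    (t : ℝ) (x : EuclideanSpace ℝ (Fin n)) : ℝ :=
  (∑ i : Fin n,
    iteratedDeriv 2 (fun r : ℝ => u (t, x + r • EuclideanSpace.single i (1 : ℝ))) 0)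
  - deriv (fun s : ℝ => u (s, x)) t

noncomputable def pv (n : ℕ) (lp tm : ℝ) (xm : EuclideanSpace ℝ (Fin n))
    (p : ℝ × EuclideanSpace ℝ (Fin n)) : ℝ :=
  lp * ((tm - p.1) / 2 + ‖p.2 - xm‖ ^ 2 / (8 * n))

set_option maxHeartbeats 1000000 in
/-- Non-degeneracy. If u is continuous on the closure of
Q_r⁻(t_m,x_m) = (t_m−r²,t_m)×B_r(x_m), u(t_m,x_m) > 0, and Δu − ∂ₜu ≥ λ₊ on
{u > 0} ∩ Q_r⁻(t_m,x_m), then sup_{Q_r⁻(t_m,x_m)} u > (λ₊/(8n))·r². -/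
theorem stmt_14 (n : ℕ) (hn : 0 < n) (r lp : ℝ) (hr : 0 < r) (hlp : 0 < lp)
    (tm : ℝ) (xm : EuclideanSpace ℝ (Fin n))
    (u : ℝ × EuclideanSpace ℝ (Fin n) → ℝ)
    (hcont : ContinuousOn u (closure (Set.Ioo (tm - r ^ 2) tm ×ˢ Metric.ball xm r)))
    (hpos : 0 < u (tm, xm))
    (hreg : ∀ p ∈ Set.Ioo (tm - r ^ 2) tm ×ˢ Metric.ball xm r,
      0 < u p → ContDiffAt ℝ 2 u p)
    (heq : ∀ t : ℝ, ∀ x : EuclideanSpace ℝ (Fin n),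
      (t, x) ∈ Set.Ioo (tm - r ^ 2) tm ×ˢ Metric.ball xm r →
        0 < u (t, x) → lp ≤ heatOp n u t x) :
    ∃ p ∈ closure (Set.Ioo (tm - r ^ 2) tm ×ˢ Metric.ball xm r),
      lp / (8 * n) * r ^ 2 < u p := by
  by_contra hcon
  push_neg at hcon
  have hr2 : (0:ℝ) < r ^ 2 := by positivity
  have hnn : (0:ℝ) < (n:ℝ) := by exact_mod_cast hn
  have hnn1 : (1:ℝ) ≤ (n:ℝ) := by exact_mod_cast hn
  set A := tm - r ^ 2 with hAdef
  set C := lp / (8 * (n:ℝ)) * r ^ 2 with hCdef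
  have hclos : closure (Set.Ioo A tm ×ˢ Metric.ball xm r)
      = Set.Icc A tm ×ˢ Metric.closedBall xm r := by
    rw [closure_prod_eq, closure_Ioo (by nlinarith : A ≠ tm), closure_ball xm hr.ne']
  have hvcont : Continuous (pv n lp tm xm) := by unfold pv; fun_prop
  -- Step 1 : find δ
  have hmem_tm : ((tm, xm) : ℝ × EuclideanSpace ℝ (Fin n))
      ∈ closure (Set.Ioo A tm ×ˢ Metric.ball xm r) := by
    rw [hclos]
    exact ⟨⟨by nlinarith, le_rfl⟩, Metric.mem_closedBall_self hr.le⟩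
  have hpath : Tendsto (fun d : ℝ => ((tm - d, xm) : ℝ × EuclideanSpace ℝ (Fin n)))
      (𝓝[>] 0) (𝓝[closure (Set.Ioo A tm ×ˢ Metric.ball xm r)] (tm, xm)) := by
    apply tendsto_nhdsWithin_of_tendsto_nhds_of_eventually_within
    · have hc : Continuous (fun d : ℝ => ((tm - d, xm) : ℝ × EuclideanSpace ℝ (Fin n))) :=
        (continuous_const.sub continuous_id).prodMk continuous_const
      have := hc.tendsto 0
      simpa using this.mono_left nhdsWithin_le_nhds
    · filter_upwards [Ioo_mem_nhdsGT_of_mem (left_mem_Ico.2 hr2)] with d hd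
      rw [hclos]
      have h1 : (tm - d) ∈ Set.Icc A tm :=
        ⟨by simp only [hAdef]; linarith [hd.2], by linarith [hd.1]⟩
      exact Set.mem_prod.2 ⟨h1, Metric.mem_closedBall_self hr.le⟩
  have htend : Tendsto (fun d : ℝ => u (tm - d, xm) - lp * d / 2) (𝓝[>] 0)
      (𝓝 (u (tm, xm))) := by
    have h1 : Tendsto (fun d : ℝ => u (tm - d, xm)) (𝓝[>] 0) (𝓝 (u (tm, xm))) :=
      (hcont _ hmem_tm).tendsto.comp hpath
    have h2 : Tendsto (fun d : ℝ => lp * d / 2) (𝓝[>] 0) (𝓝 0) := by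
      have hc2 : Continuous (fun d : ℝ => lp * d / 2) := by fun_prop
      have := hc2.tendsto 0
      simp only [mul_zero, zero_div] at this
      exact this.mono_left nhdsWithin_le_nhds
    simpa using h1.sub h2
  have hev : ∀ᶠ d in 𝓝[>] (0:ℝ),
      0 < u (tm - d, xm) - lp * d / 2 ∧ d ∈ Set.Ioo (0:ℝ) (r ^ 2) := by
    refine (htend.eventually (eventually_gt_nhds hpos)).and ?_
    exact Ioo_mem_nhdsGT_of_mem (left_mem_Ico.2 hr2)
  obtain ⟨δ, hδu, hδ1, hδ2⟩ : ∃ δ : ℝ, 0 < u (tm - δ, xm) - lp * δ / 2 ∧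
      0 < δ ∧ δ < r ^ 2 := by
    obtain ⟨δ, h1, h2⟩ := hev.exists
    exact ⟨δ, h1, h2.1, h2.2⟩
  -- Step 2 : max of w on smaller cylinder
  set S := Set.Icc A (tm - δ) ×ˢ Metric.closedBall xm r with hSdef
  have hS_sub : S ⊆ closure (Set.Ioo A tm ×ˢ Metric.ball xm r) := by
    rw [hclos]
    exact Set.prod_mono (Set.Icc_subset_Icc_right (by linarith)) subset_rfl
  have hScomp : IsCompact S := isCompact_Icc.prod (isCompact_closedBall _ _)
  have hSne : ((tm - δ, xm) : ℝ × EuclideanSpace ℝ (Fin n)) ∈ S := by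
    refine ⟨⟨?_, le_rfl⟩, Metric.mem_closedBall_self hr.le⟩
    simp only [hAdef]; linarith
  have hwcont : ContinuousOn (fun p => u p - pv n lp tm xm p) S :=
    (hcont.mono hS_sub).sub hvcont.continuousOn
  obtain ⟨p₀, hp₀S, hp₀max⟩ := hScomp.exists_isMaxOn ⟨_, hSne⟩ hwcont
  obtain ⟨t₀, x₀⟩ := p₀
  obtain ⟨ht₀I, hx₀cb⟩ := hp₀S
  have ht₀1 : A ≤ t₀ := ht₀I.1
  have ht₀2 : t₀ ≤ tm - δ := ht₀I.2
  have hx₀r : ‖x₀ - xm‖ ≤ r := by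
    rw [← dist_eq_norm]; exact hx₀cb
  have hmax : ∀ p ∈ S, u p - pv n lp tm xm p ≤ u (t₀, x₀) - pv n lp tm xm (t₀, x₀) :=
    fun p hp => hp₀max hp
  have hvδ : pv n lp tm xm (tm - δ, xm) = lp * δ / 2 := by
    simp only [pv]
    simp only [sub_sub_cancel, sub_self, norm_zero]
    norm_num
    ring
  have hwpos : 0 < u (t₀, x₀) - pv n lp tm xm (t₀, x₀) := by
    have := hmax _ hSne
    rw [hvδ] at this
    linarith
  have hvnonneg : 0 ≤ pv n lp tm xm (t₀, x₀) := by
    simp only [pv]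
    have h1 : (0:ℝ) ≤ (tm - t₀) / 2 := by linarith
    have h2 : (0:ℝ) ≤ ‖x₀ - xm‖ ^ 2 / (8 * (n:ℝ)) := by positivity
    nlinarith
  have hupos : 0 < u (t₀, x₀) := by linarith
  have huC : u (t₀, x₀) ≤ C := hcon _ (hS_sub ⟨ht₀I, hx₀cb⟩)
  have hvC : pv n lp tm xm (t₀, x₀) < C := by linarith
  -- boundary exclusion
  have hx₀ : ‖x₀ - xm‖ < r := by
    by_contra hcontra
    push_neg at hcontra
    have : C ≤ pv n lp tm xm (t₀, x₀) := by
      simp only [pv, hCdef]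
      have h1 : (0:ℝ) ≤ (tm - t₀) / 2 := by linarith
      have h2 : r ^ 2 / (8 * (n:ℝ)) ≤ ‖x₀ - xm‖ ^ 2 / (8 * (n:ℝ)) := by
        apply div_le_div_of_nonneg_right ?_ (by positivity)
        nlinarith
      have h3 : lp / (8 * (n:ℝ)) * r ^ 2 = lp * (r ^ 2 / (8 * (n:ℝ))) := by
        field_simp
      rw [h3]
      nlinarith
    linarith
  have ht₀A : A < t₀ := by
    rcases lt_or_eq_of_le ht₀1 with h | h
    · exact h
    · exfalso
      have : C ≤ pv n lp tm xm (t₀, x₀) := by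
        simp only [pv, hCdef]
        have h1 : tm - t₀ = r ^ 2 := by rw [← h]; simp only [hAdef]; ring
        have h2 : (0:ℝ) ≤ ‖x₀ - xm‖ ^ 2 / (8 * (n:ℝ)) := by positivity
        have h4 : lp / (8 * (n:ℝ)) * r ^ 2 ≤ lp * (r ^ 2 / 2) := by
          have h5 : lp / (8 * (n:ℝ)) * r ^ 2 = lp * (r ^ 2 / (8 * (n:ℝ))) := by ring
          rw [h5]
          have h6 : r ^ 2 / (8 * (n:ℝ)) ≤ r ^ 2 / 2 := by
            rw [div_le_div_iff₀ (by positivity) (by norm_num)]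
            nlinarith
          exact mul_le_mul_of_nonneg_left h6 hlp.le
        nlinarith
      linarith
  have hmemD : ((t₀, x₀) : ℝ × EuclideanSpace ℝ (Fin n))
      ∈ Set.Ioo A tm ×ˢ Metric.ball xm r := by
    refine ⟨⟨ht₀A, by linarith⟩, ?_⟩
    rw [Metric.mem_ball, dist_eq_norm]; exact hx₀
  have hC2 : ContDiffAt ℝ 2 u (t₀, x₀) := hreg _ hmemD hupos
  have hheat : lp ≤ heatOp n u t₀ x₀ := heq t₀ x₀ hmemD hupos
  -- Step 3a : time derivative bound
  have htime : -(lp / 2) ≤ deriv (fun s : ℝ => u (s, x₀)) t₀ := by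
    have hcompC : ContDiffAt ℝ 2 (fun s : ℝ => u (s, x₀)) t₀ := by
      have hmap : ContDiffAt ℝ 2
          (fun s : ℝ => ((s, x₀) : ℝ × EuclideanSpace ℝ (Fin n))) t₀ :=
        contDiffAt_id.prodMk contDiffAt_const
      exact ContDiffAt.comp t₀ hC2 hmap
    have hFd : DifferentiableAt ℝ (fun s : ℝ => u (s, x₀)) t₀ :=
      hcompC.differentiableAt (by norm_num)
    have hG : HasDerivAt (fun s : ℝ => u (s, x₀) + lp / 2 * s)
        (deriv (fun s : ℝ => u (s, x₀)) t₀ + lp / 2) t₀ := by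
      have h2 : HasDerivAt (fun s : ℝ => lp / 2 * s) (lp / 2) t₀ := by
        simpa using (hasDerivAt_id t₀).const_mul (lp / 2)
      exact hFd.hasDerivAt.add h2
    have hleft : ∀ᶠ s in 𝓝[<] t₀,
        u (s, x₀) + lp / 2 * s ≤ u (t₀, x₀) + lp / 2 * t₀ := by
      filter_upwards [Ioo_mem_nhdsLT_of_mem (⟨ht₀A, le_rfl⟩ : t₀ ∈ Set.Ioc A t₀)]
        with s hs
      have hsS : ((s, x₀) : ℝ × EuclideanSpace ℝ (Fin n)) ∈ S :=
        ⟨⟨hs.1.le, by linarith [hs.2]⟩, hx₀cb⟩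
      have hineq := hmax _ hsS
      have hexp : pv n lp tm xm (s, x₀) - pv n lp tm xm (t₀, x₀)
          = lp / 2 * t₀ - lp / 2 * s := by
        simp only [pv]; ring
      linarith
    have := deriv_nonneg_of_left_max hG hleft
    linarith
  -- Step 3b : spatial bound
  have hspace : ∀ i : Fin n,
      iteratedDeriv 2 (fun s : ℝ => u (t₀, x₀ + s • EuclideanSpace.single i (1:ℝ))) 0
        ≤ lp / (4 * (n:ℝ)) := by
    intro i
    set e : EuclideanSpace ℝ (Fin n) := EuclideanSpace.single i (1:ℝ) with hedef
    have he : ‖e‖ = 1 := by simp [hedef, EuclideanSpace.norm_single]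
    set b := lp / (8 * (n:ℝ)) * (2 * ⟪x₀ - xm, e⟫) with hbdef
    set c := lp / (8 * (n:ℝ)) with hcdef2
    have hfC2 : ContDiffAt ℝ 2 (fun s : ℝ => u (t₀, x₀ + s • e)) 0 := by
      have hmap : ContDiffAt ℝ 2
          (fun s : ℝ => ((t₀, x₀ + s • e) : ℝ × EuclideanSpace ℝ (Fin n))) 0 :=
        contDiffAt_const.prodMk (contDiffAt_const.add (contDiffAt_id.smul contDiffAt_const))
      have h0 : ((t₀, x₀ + (0:ℝ) • e) : ℝ × EuclideanSpace ℝ (Fin n)) = (t₀, x₀) := by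
        simp
      have hC2' : ContDiffAt ℝ 2 u
          ((t₀, x₀ + (0:ℝ) • e) : ℝ × EuclideanSpace ℝ (Fin n)) := by
        rw [h0]; exact hC2
      exact ContDiffAt.comp 0 hC2' hmap
    have hnorm : ∀ s : ℝ, ‖x₀ + s • e - xm‖ ^ 2
        = ‖x₀ - xm‖ ^ 2 + (2 * ⟪x₀ - xm, e⟫ * s + s ^ 2) := by
      intro s
      have h1 : x₀ + s • e - xm = (x₀ - xm) + s • e := by abel
      rw [h1, norm_add_sq_real, real_inner_smul_right, norm_smul, he]
      simp [sq_abs]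
      ring
    have hvx : ∀ s : ℝ, pv n lp tm xm (t₀, x₀ + s • e)
        = pv n lp tm xm (t₀, x₀) + (b * s + c * s ^ 2) := by
      intro s
      simp only [pv, hnorm s, hbdef, hcdef2]
      ring
    have hmaxg : IsLocalMax (fun s : ℝ => u (t₀, x₀ + s • e) - (b * s + c * s ^ 2)) 0 := by
      have hε : (0:ℝ) < r - ‖x₀ - xm‖ := by linarith
      refine Filter.eventually_of_mem (Metric.ball_mem_nhds 0 hε) ?_
      intro s hs
      have habs : |s| < r - ‖x₀ - xm‖ := by
        simpa [Real.dist_eq] using hs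
      have hcb : x₀ + s • e ∈ Metric.closedBall xm r := by
        rw [Metric.mem_closedBall, dist_eq_norm]
        have h1 : x₀ + s • e - xm = (x₀ - xm) + s • e := by abel
        rw [h1]
        have := norm_add_le (x₀ - xm) (s • e)
        rw [norm_smul, he, mul_one] at this
        calc ‖x₀ - xm + s • e‖ ≤ ‖x₀ - xm‖ + ‖s‖ := this
        _ ≤ r := by rw [Real.norm_eq_abs]; linarith
      have hsS : ((t₀, x₀ + s • e) : ℝ × EuclideanSpace ℝ (Fin n)) ∈ S := ⟨ht₀I, hcb⟩
      have hineq := hmax _ hsS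
      rw [hvx s] at hineq
      show u (t₀, x₀ + s • e) - (b * s + c * s ^ 2)
        ≤ u (t₀, x₀ + (0:ℝ) • e) - (b * 0 + c * 0 ^ 2)
      simp only [zero_smul, add_zero]
      ring_nf
      ring_nf at hineq
      linarith
    have hquad := iteratedDeriv_two_le_of_quad_max hfC2 hmaxg
    have h2c : 2 * c = lp / (4 * (n:ℝ)) := by
      rw [hcdef2]; field_simp; ring
    rw [h2c] at hquad
    exact hquad
  -- combine
  have hsum : ∑ i : Fin n,
      iteratedDeriv 2 (fun s : ℝ => u (t₀, x₀ + s • EuclideanSpace.single i (1:ℝ))) 0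
        ≤ lp / 4 := by
    calc ∑ i : Fin n, iteratedDeriv 2
          (fun s : ℝ => u (t₀, x₀ + s • EuclideanSpace.single i (1:ℝ))) 0
        ≤ ∑ _i : Fin n, lp / (4 * (n:ℝ)) := Finset.sum_le_sum fun i _ => hspace i
      _ = (n : ℝ) * (lp / (4 * (n:ℝ))) := by
          rw [Finset.sum_const, Finset.card_univ, Fintype.card_fin, nsmul_eq_mul]
      _ = lp / 4 := by field_simp
  have : heatOp n u t₀ x₀ ≤ lp / 4 + lp / 2 := by
    unfold heatOp
    have := htime
    linarith
  linarith
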